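/- Let t be a fine infinite word over a finite alphabet A with witness s, and suppose that a·s = min(s) for every letter a ∈ A and every order making a minimal. Then F(t) = F(s); consequently t is an A-strict episturmian word. -/

import Mathlib

/-- The prefix of length `k` of an infinite word `w : ℕ → A`. -/
def pref {A : Type*} (w : ℕ → A) (k : ℕ) : List A := (List.range k).map w

/-- `u` is a (finite) factor of the infinite word `w`. -/
def IsFactor {A : Type*} (w : ℕ → A) (u : List A) : Prop :=
  ∃ i : ℕ, u = (List.range u.length).map (fun j => w (i + j))

/-- Prepend a letter to an infinite word. -/
def consW {A : Type*} (a : A) (s : ℕ → A) : ℕ → A := fun n => match n with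
  | 0 => a
  | n + 1 => s n

/-- Concatenation of a finite word with an infinite word. -/
def catW {A : Type*} (u : List A) (w : ℕ → A) : ℕ → A := fun n =>
  if h : n < u.length then u.get ⟨n, h⟩ else w (n - u.length)

/-- `u` is the lexicographically smallest factor of `w` of length `k`,
w.r.t. the strict order `lt` on letters. -/
def IsMinFactor {A : Type*} (lt : A → A → Prop) (w : ℕ → A) (k : ℕ) (u : List A) : Prop :=
  IsFactor w u ∧ u.length = k ∧
    ∀ v, IsFactor w v → v.length = k → u = v ∨ List.Lex lt u v

/-- `u` is the lexicographically greatest factor of `w` of length `k`. -/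
def IsMaxFactor {A : Type*} (lt : A → A → Prop) (w : ℕ → A) (k : ℕ) (u : List A) : Prop :=
  IsFactor w u ∧ u.length = k ∧
    ∀ v, IsFactor w v → v.length = k → u = v ∨ List.Lex lt v u

/-- `m = min(w)`: every length-`k` prefix of `m` is the lexicographically
smallest factor of `w` of length `k`. -/
def IsMinWord {A : Type*} (lt : A → A → Prop) (w m : ℕ → A) : Prop :=
  ∀ k : ℕ, IsMinFactor lt w k (pref m k)

/-- `m = max(w)`. -/
def IsMaxWord {A : Type*} (lt : A → A → Prop) (w m : ℕ → A) : Prop :=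
  ∀ k : ℕ, IsMaxFactor lt w k (pref m k)

/-- The letter `z` is separating for `t`: every length-2 factor of `t` contains `z`. -/
def Separating {A : Type*} (z : A) (t : ℕ → A) : Prop :=
  ∀ u, IsFactor t u → u.length = 2 → z ∈ u

/-- The episturmian morphism `Ψ_z` on finite words: `z ↦ z`, `x ↦ zx` for `x ≠ z`. -/
def psiL {A : Type*} [DecidableEq A] (z : A) (u : List A) : List A :=
  u.flatMap (fun x => if x = z then [z] else [z, x])

/-- `t = Ψ_z(y)` for infinite words: the `Ψ_z`-image of every prefix of `y`
is a prefix of `t`. -/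
def PsiImage {A : Type*} [DecidableEq A] (z : A) (y t : ℕ → A) : Prop :=
  ∀ n : ℕ, psiL z (pref y n) = pref t (psiL z (pref y n)).length

/-- `u` is a left special factor of `w`. -/
def LeftSpecial {A : Type*} (w : ℕ → A) (u : List A) : Prop :=
  ∃ a b : A, a ≠ b ∧ IsFactor w (a :: u) ∧ IsFactor w (b :: u)

/-- `u` is a right special factor of `w`. -/
def RightSpecial {A : Type*} (w : ℕ → A) (u : List A) : Prop :=
  ∃ a b : A, a ≠ b ∧ IsFactor w (u ++ [a]) ∧ IsFactor w (u ++ [b])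

/-- `w` is a standard episturmian word: factors closed under reversal and
every left special factor is a prefix. -/
def StdEpisturmian {A : Type*} (w : ℕ → A) : Prop :=
  (∀ u, IsFactor w u → IsFactor w u.reverse) ∧
  (∀ u, LeftSpecial w u → u = pref w u.length)

/-- `w` is an `A`-strict standard episturmian word (standard Arnoux-Rauzy sequence):
standard episturmian and every prefix has every letter as a left extension. -/
def StrictStdEpisturmian {A : Type*} (w : ℕ → A) : Prop :=
  StdEpisturmian w ∧ ∀ (n : ℕ) (a : A), IsFactor w (a :: pref w n)

/-- `w` is episturmian: factors closed under reversal and at most one right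
special factor of each length. -/
def Episturmian {A : Type*} (w : ℕ → A) : Prop :=
  (∀ u, IsFactor w u → IsFactor w u.reverse) ∧
  (∀ u v, RightSpecial w u → RightSpecial w v → u.length = v.length → u = v)

/-- `w` is an `A`-strict episturmian word: it has the same set of factors as some
`A`-strict standard episturmian word. -/
def StrictEpisturmian {A : Type*} (w : ℕ → A) : Prop :=
  ∃ s : ℕ → A, StrictStdEpisturmian s ∧ ∀ u, IsFactor w u ↔ IsFactor s u

/-- `t` is fine: there is an infinite word `s` such that for every total order on the
alphabet and every letter `a` minimal for that order, `min(t) = a·s`. -/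
def Fine {A : Type*} (t : ℕ → A) : Prop :=
  ∃ s : ℕ → A, ∀ (l : LinearOrder A) (a : A), (∀ b, l.le a b) →
    IsMinWord l.lt t (consW a s)

namespace Stmt11Aux
variable {A : Type*}

/-- segment of an infinite word -/
def seg (w : ℕ → A) (i n : ℕ) : List A := (List.range n).map (fun r => w (i + r))

@[simp] lemma seg_len (w : ℕ → A) (i n : ℕ) : (seg w i n).length = n := by simp [seg]

lemma getElem_seg (w : ℕ → A) (i n r : ℕ) (hr : r < n) :
    (seg w i n)[r]'(by simpa using hr) = w (i + r) := by simp [seg]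

lemma getElem?_seg (w : ℕ → A) (i n r : ℕ) (hr : r < n) :
    (seg w i n)[r]? = some (w (i + r)) := by
  rw [List.getElem?_eq_getElem (by simpa using hr), getElem_seg w i n r hr]

lemma isFactor_def (w : ℕ → A) (u : List A) : IsFactor w u ↔ ∃ i, u = seg w i u.length :=
  Iff.rfl

lemma isFactor_seg (w : ℕ → A) (i n : ℕ) : IsFactor w (seg w i n) :=
  ⟨i, by simp [seg]⟩

lemma pref_eq_seg (w : ℕ → A) (k : ℕ) : pref w k = seg w 0 k := by
  simp [pref, seg]

lemma seg_append (w : ℕ → A) (i a b : ℕ) :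
    seg w i (a + b) = seg w i a ++ seg w (i + a) b := by
  apply List.ext_getElem
  · simp
  · intro r h1 h2
    simp only [seg_len] at h1
    by_cases hr : r < a
    · rw [getElem_seg w i (a+b) r h1, List.getElem_append_left (by simpa using hr),
        getElem_seg w i a r hr]
    · rw [getElem_seg w i (a+b) r h1,
        List.getElem_append_right (by simpa using hr)]
      rw [getElem_seg w (i+a) b]
      · congr 1; simp; omega
      · simp; omega

lemma seg_cons (w : ℕ → A) (i n : ℕ) : seg w i (n + 1) = w i :: seg w (i + 1) n := by
  have := seg_append w i 1 n
  rw [add_comm 1 n] at this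
  rw [this]
  simp [seg, List.range_succ]

lemma eq_seg {W : List A} {f : ℕ → A} {i n : ℕ} (hlen : W.length = n)
    (h : ∀ r, r < n → W[r]? = some (f (i + r))) : W = seg f i n := by
  apply List.ext_getElem?
  intro r
  by_cases hr : r < n
  · rw [h r hr, getElem?_seg f i n r hr]
  · rw [List.getElem?_eq_none (by omega), List.getElem?_eq_none (by simp; omega)]

lemma seg_entry {W : List A} {f : ℕ → A} {i n : ℕ} (h : W = seg f i n) :
    ∀ r, r < n → W[r]? = some (f (i + r)) := by
  intro r hr; rw [h, getElem?_seg f i n r hr]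

lemma seg_congr {f g : ℕ → A} {i j n : ℕ} (h : ∀ r, r < n → f (i + r) = g (j + r)) :
    seg f i n = seg g j n := by
  apply eq_seg (by simp)
  intro r hr
  rw [getElem?_seg f i n r hr, h r hr]

lemma seg_eq_entries {f g : ℕ → A} {i j n : ℕ} (h : seg f i n = seg g j n) :
    ∀ r, r < n → f (i + r) = g (j + r) := by
  intro r hr
  have hc := congrArg (fun L => L[r]?) h
  try simp only at hc
  rw [getElem?_seg f i n r hr, getElem?_seg g j n r hr] at hc
  exact Option.some.inj hc

lemma seg_consW (c : A) (f : ℕ → A) (M : ℕ) :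
    seg (consW c f) 0 (M + 1) = c :: seg f 0 M := by
  rw [seg_cons]
  congr 1
  apply seg_congr
  intro r hr
  show consW c f (0 + 1 + r) = f (0 + r)
  rw [show 0 + 1 + r = (0 + r) + 1 by omega]
  rfl

lemma infix_seg {w : ℕ → A} {i n i' L : ℕ} (h1 : i' ≤ i) (h2 : i + n ≤ i' + L) :
    seg w i n <:+: seg w i' L := by
  set R := i' + L - (i + n) with hR
  refine ⟨seg w i' (i - i'), seg w (i + n) R, ?_⟩
  have e1 : L = (i - i') + (n + R) := by omega
  have e2 : i' + (i - i') = i := by omega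
  have key : seg w i' L = seg w i' (i - i') ++ (seg w i n ++ seg w (i + n) R) := by
    rw [e1, seg_append, e2, seg_append]
  rw [key, List.append_assoc]

lemma factor_of_infix {w : ℕ → A} {u v : List A} (h : u <:+: v) (hv : IsFactor w v) :
    IsFactor w u := by
  obtain ⟨i, hi⟩ := hv
  obtain ⟨p, q, hpq⟩ := h
  refine ⟨i + p.length, ?_⟩
  show u = seg w (i + p.length) u.length
  apply eq_seg rfl
  intro r hr
  have hv' : v = seg w i v.length := hi
  have hlen : v.length = p.length + u.length + q.length := by rw [← hpq]; simp; omega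
  have h1 : v = p ++ (u ++ q) := by rw [← hpq, List.append_assoc]
  have hidx : p.length + r < v.length := by omega
  have := seg_entry hv' (p.length + r) hidx
  rw [h1, List.getElem?_append_right (by omega)] at this
  simp only [Nat.add_sub_cancel_left] at this
  rw [List.getElem?_append, if_pos hr] at this
  rw [Nat.add_assoc]
  exact this

@[simp] lemma consW_zero (a : A) (s : ℕ → A) : consW a s 0 = a := rfl
@[simp] lemma consW_succ (a : A) (s : ℕ → A) (n : ℕ) : consW a s (n + 1) = s n := rfl

section Orders
variable [Fintype A]

lemma exists_bot (a : A) : ∃ l : LinearOrder A, ∀ b, l.le a b := by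
  have hne : Nonempty A := ⟨a⟩
  have hpos : 0 < Fintype.card A := Fintype.card_pos
  let e : A ≃ Fin (Fintype.card A) := Fintype.equivFin A
  let f : A ≃ Fin (Fintype.card A) := e.trans (Equiv.swap (e a) ⟨0, hpos⟩)
  refine ⟨LinearOrder.lift' f f.injective, ?_⟩
  intro b
  show f a ≤ f b
  have hfa : f a = ⟨0, hpos⟩ := by simp [f]
  rw [hfa]
  simp [Fin.le_def]

lemma exists_bot_top {a c : A} (h : a ≠ c) :
    ∃ l : LinearOrder A, (∀ b, l.le a b) ∧ (∀ b, l.le b c) := by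
  have hnt : Nontrivial A := ⟨a, c, h⟩
  have h2 : 2 ≤ Fintype.card A := Fintype.one_lt_card
  have hpos : 0 < Fintype.card A := by omega
  let e : A ≃ Fin (Fintype.card A) := Fintype.equivFin A
  let f1 : A ≃ Fin (Fintype.card A) := e.trans (Equiv.swap (e a) ⟨0, hpos⟩)
  have hf1a : f1 a = ⟨0, hpos⟩ := by simp [f1]
  let top : Fin (Fintype.card A) := ⟨Fintype.card A - 1, by omega⟩
  have hne0 : f1 c ≠ ⟨0, hpos⟩ := by
    rw [← hf1a]
    intro hh
    exact h (f1.injective hh.symm)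
  have htne : (⟨0, hpos⟩ : Fin (Fintype.card A)) ≠ top := by
    simp only [top, Fin.ne_iff_vne]
    omega
  let f : A ≃ Fin (Fintype.card A) := f1.trans (Equiv.swap (f1 c) top)
  have hfc : f c = top := by simp [f]
  have hfa : f a = ⟨0, hpos⟩ := by
    show Equiv.swap (f1 c) top (f1 a) = _
    rw [hf1a, Equiv.swap_apply_of_ne_of_ne (Ne.symm hne0) htne]
  refine ⟨LinearOrder.lift' f f.injective, ?_, ?_⟩
  · intro b
    show f a ≤ f b
    rw [hfa]
    simp [Fin.le_def]
  · intro b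
    show f b ≤ f c
    rw [hfc]
    simp only [top, Fin.le_def]
    have := (f b).isLt
    omega

end Orders

section Lex
variable {ltr : A → A → Prop}

lemma lex_firstdiff : ∀ {U V : List A}, List.Lex ltr U V →
    (∃ (r : ℕ) (x y : A), (∀ q, q < r → U[q]? = V[q]?) ∧ U[r]? = some x ∧ V[r]? = some y ∧ ltr x y)
      ∨ U <+: V := by
  intro U V h
  induction h with
  | nil => exact Or.inr (List.nil_prefix)
  | @rel a l b l' hab =>
    exact Or.inl ⟨0, a, b, fun q hq => absurd hq (Nat.not_lt_zero q), by simp, by simp, hab⟩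
  | @cons a l l' h ih =>
    rcases ih with ⟨r, x, y, hq, hx, hy, hlt⟩ | hpre
    · refine Or.inl ⟨r + 1, x, y, ?_, by simpa using hx, by simpa using hy, hlt⟩
      intro q hq'
      match q with
      | 0 => simp
      | Nat.succ q' => simpa using hq q' (by omega)
    · exact Or.inr (by obtain ⟨tt, htt⟩ := hpre; exact ⟨tt, by rw [← htt]; rfl⟩)

lemma le_of_minlike (l : LinearOrder A) {f g : ℕ → A} {K m : ℕ} (hm : m < K)
    (h : seg f 0 K = seg g 0 K ∨ List.Lex l.lt (seg f 0 K) (seg g 0 K))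
    (hagree : ∀ r, r < m → f r = g r) : l.le (f m) (g m) := by
  have heqcase : seg f 0 K = seg g 0 K → l.le (f m) (g m) := by
    intro he
    have h1 := seg_entry he.symm m hm
    rw [getElem?_seg g 0 K m hm] at h1
    simp only [Option.some.injEq, Nat.zero_add] at h1
    exact le_of_eq h1.symm
  rcases h with he | hlex
  · exact heqcase he
  · rcases lex_firstdiff hlex with ⟨r, x, y, hq, hx, hy, hlt⟩ | hpre
    · rcases lt_trichotomy r m with hrm | rfl | hmr
      · exfalso
        have hrK : r < K := by omega
        rw [getElem?_seg f 0 K r hrK] at hx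
        rw [getElem?_seg g 0 K r hrK] at hy
        simp only [Option.some.injEq] at hx hy
        rw [← hx, ← hy] at hlt
        simp only [Nat.zero_add] at hlt
        rw [hagree r hrm] at hlt
        exact absurd hlt (lt_irrefl _)
      · rw [getElem?_seg f 0 K r hm] at hx
        rw [getElem?_seg g 0 K r hm] at hy
        simp only [Option.some.injEq] at hx hy
        rw [← hx, ← hy] at hlt
        simp only [Nat.zero_add] at hlt
        exact le_of_lt hlt
      · have := hq m hmr
        rw [getElem?_seg f 0 K m hm, getElem?_seg g 0 K m hm] at this
        simp only [Option.some.injEq, Nat.zero_add] at this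
        exact le_of_eq this
    · exact heqcase (hpre.eq_of_length (by simp))

end Lex

/-- pointwise lower-bound property: for every order with bottom `a`,
`a·s` is lexicographically ≤ every shift of `x`. -/
def LBp [Fintype A] (s x : ℕ → A) : Prop :=
  ∀ (l : LinearOrder A) (a : A), (∀ b, l.le a b) → ∀ j m,
    (∀ r, r < m → consW a s r = x (j + r)) → l.le (consW a s m) (x (j + m))

section LB
variable [Fintype A]

lemma LBp_of_min {s x : ℕ → A}
    (h : ∀ (l : LinearOrder A) (a : A), (∀ b, l.le a b) → IsMinWord l.lt x (consW a s)) :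
    LBp s x := by
  intro l a ha j m hagree
  obtain ⟨hfac, hlen, hmin⟩ := h l a ha (m + 1)
  have hv := hmin (seg x j (m + 1)) (isFactor_seg x j (m + 1)) (by simp)
  have hv' : pref (consW a s) (m+1) = seg (fun r => x (j + r)) 0 (m+1) ∨
      List.Lex l.lt (pref (consW a s) (m+1)) (seg (fun r => x (j + r)) 0 (m+1)) := by
    have : seg x j (m+1) = seg (fun r => x (j + r)) 0 (m+1) :=
      seg_congr (fun r hr => by simp)
    rwa [this] at hv
  rw [pref_eq_seg] at hv'
  exact le_of_minlike l (Nat.lt_succ_self m) hv' hagree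

lemma sep_of_LBp {s x : ℕ → A} (h : LBp s x) : ∀ i, x i = s 0 ∨ x (i + 1) = s 0 := by
  intro i
  by_cases hxi : x i = s 0
  · exact Or.inl hxi
  · right
    obtain ⟨l, hbot, htop⟩ := exists_bot_top hxi
    have h1 := h l (x i) hbot i 1 (fun r hr => by
      have : r = 0 := by omega
      subst this
      simp)
    simp only [consW_succ] at h1
    exact (le_antisymm h1 (htop _)).symm

lemma LBp_consW {s x : ℕ → A} (h : LBp s x) (hx0 : x 0 ≠ s 0) : LBp s (consW (s 0) x) := by
  intro l a ha j m hagree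
  match j, m with
  | 0, 0 => simpa using ha _
  | 0, 1 =>
    have h0 : a = s 0 := by simpa using hagree 0 (by omega)
    simp only [consW_succ, Nat.zero_add, consW_zero]
    rw [← h0]
    exact ha _
  | 0, (M + 2) =>
    exfalso
    have h1 := hagree 1 (by omega)
    simp only [consW_succ, Nat.zero_add] at h1
    exact hx0 h1.symm
  | (j' + 1), m =>
    have hagree' : ∀ r, r < m → consW a s r = x (j' + r) := by
      intro r hr
      have := hagree r hr
      rwa [show j' + 1 + r = (j' + r) + 1 by omega, consW_succ] at this
    have := h l a ha j' m hagree'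
    rwa [show j' + 1 + m = (j' + m) + 1 by omega, consW_succ]

lemma forcing {p v a : A} (hne : v ≠ p)
    (H : ∀ l : LinearOrder A, (∀ b, l.le a b) → l.le p v) : p = a := by
  by_contra hpa
  obtain ⟨l, hbot, htop⟩ := exists_bot_top (show a ≠ p from fun hh => hpa hh.symm)
  exact hne (le_antisymm (htop v) (H l hbot))

end LB

section Decode
variable [DecidableEq A]

/-- `y` starts with `z` and `z` is separating for `y`. -/
structure Dec (z : A) (y : ℕ → A) : Prop where
  h0 : y 0 = z
  hsep : ∀ i, y i = z ∨ y (i + 1) = z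

/-- block start positions of the `ψ_z`-decomposition of `y`. -/
def bs (z : A) (y : ℕ → A) : ℕ → ℕ
  | 0 => 0
  | n + 1 => bs z y n + (if y (bs z y n + 1) = z then 1 else 2)

/-- the decoded word (`y = ψ_z (dec z y)`). -/
def dec (z : A) (y : ℕ → A) (n : ℕ) : A := y (bs z y n + 1)

variable {z : A} {y : ℕ → A}

lemma bs_z (hd : Dec z y) : ∀ n, y (bs z y n) = z := by
  intro n
  induction n with
  | zero => exact hd.h0
  | succ n ih =>
    by_cases h : y (bs z y n + 1) = z
    · simp [bs, h]
    · simp only [bs, if_neg h]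
      rcases hd.hsep (bs z y n + 1) with h' | h'
      · exact absurd h' h
      · exact h'

lemma bs_succ_le (n : ℕ) : bs z y (n + 1) ≤ bs z y n + 2 := by
  simp only [bs]; split <;> omega

lemma bs_succ_ge (n : ℕ) : bs z y n + 1 ≤ bs z y (n + 1) := by
  simp only [bs]; split <;> omega

lemma bs_ge (n : ℕ) : n ≤ bs z y n := by
  induction n with
  | zero => simp [bs]
  | succ n ih => have := bs_succ_ge (z := z) (y := y) n; omega

lemma bs_mono {m n : ℕ} (h : m ≤ n) : bs z y m ≤ bs z y n := by
  induction n with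
  | zero => simp_all
  | succ n ih =>
    rcases Nat.lt_or_ge m (n + 1) with h' | h'
    · have := ih (by omega)
      have := bs_succ_ge (z := z) (y := y) n
      omega
    · have : m = n + 1 := by omega
      subst this; rfl

lemma bs_strict_mono {m n : ℕ} (h : m < n) : bs z y m < bs z y n := by
  have h1 := bs_mono (z := z) (y := y) (show m + 1 ≤ n from h)
  have := bs_succ_ge (z := z) (y := y) m
  omega

lemma bs_surj (hd : Dec z y) : ∀ i, y i = z → ∃ n, bs z y n = i := by
  have aux : ∀ i, (∃ n, bs z y n = i) ∨ (∃ n, bs z y n + 1 = i ∧ y i ≠ z) := by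
    intro i
    induction i with
    | zero => exact Or.inl ⟨0, rfl⟩
    | succ i ih =>
      rcases ih with ⟨n, hn⟩ | ⟨n, hn, hne⟩
      · by_cases h : y (bs z y n + 1) = z
        · exact Or.inl ⟨n + 1, by simp only [bs, if_pos h]; omega⟩
        · exact Or.inr ⟨n, by omega, by rw [hn] at h; exact h⟩
      · refine Or.inl ⟨n + 1, ?_⟩
        have hne : ¬ y (bs z y n + 1) = z := by rwa [hn]
        simp only [bs, if_neg hne]; omega
  intro i hi
  rcases aux i with h | ⟨n, hn, hne⟩
  · exact h
  · exact absurd hi hne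

lemma bs_last (hd : Dec z y) (j : ℕ) : y (bs z y (j + 1) - 1) = dec z y j := by
  by_cases h : y (bs z y j + 1) = z
  · simp only [bs, if_pos h, Nat.add_sub_cancel]
    rw [bs_z hd, dec, h]
  · simp only [bs, if_neg h]
    rw [show bs z y j + 2 - 1 = bs z y j + 1 by omega]
    rfl

/-- ψ of a decoded segment is a segment of `y`. -/
lemma psi_seg (hd : Dec z y) : ∀ n m,
    psiL z (seg (dec z y) n m) = seg y (bs z y n) (bs z y (n + m) - bs z y n) := by
  intro n m
  induction m with
  | zero => simp [seg, psiL, bs]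
  | succ m ih =>
    have h1 : seg (dec z y) n (m + 1) = seg (dec z y) n m ++ [dec z y (n + m)] := by
      have h2 : seg (dec z y) (n + m) 1 = [dec z y (n + m)] := by
        simp [seg, List.range_succ]
      rw [seg_append (dec z y) n m 1, h2]
    rw [h1]
    have happ : psiL z (seg (dec z y) n m ++ [dec z y (n + m)]) =
        psiL z (seg (dec z y) n m) ++ psiL z [dec z y (n + m)] := by
      simp [psiL]
    rw [happ, ih]
    have hmono : bs z y n ≤ bs z y (n + m) := bs_mono (by omega)
    by_cases h : y (bs z y (n + m) + 1) = z
    · have hb : bs z y (n + m + 1) = bs z y (n + m) + 1 := by simp [bs, h]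
      have hdc : dec z y (n + m) = z := h
      rw [show n + (m+1) = n + m + 1 by omega, hb]
      rw [show bs z y (n+m) + 1 - bs z y n = (bs z y (n+m) - bs z y n) + 1 by omega]
      rw [seg_append y (bs z y n) _ 1]
      congr 1
      · simp [psiL, hdc]
        rw [show bs z y n + (bs z y (n+m) - bs z y n) = bs z y (n+m) by omega]
        simp [seg, List.range_succ, bs_z hd]
    · have hb : bs z y (n + m + 1) = bs z y (n + m) + 2 := by simp [bs, h]
      have hdc : dec z y (n + m) = y (bs z y (n+m) + 1) := rfl
      rw [show n + (m+1) = n + m + 1 by omega, hb]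
      rw [show bs z y (n+m) + 2 - bs z y n = (bs z y (n+m) - bs z y n) + 2 by omega]
      rw [seg_append y (bs z y n) _ 2]
      congr 1
      · have hne : ¬ (dec z y (n+m) = z) := by rw [hdc]; exact h
        simp [psiL, hne]
        rw [show bs z y n + (bs z y (n+m) - bs z y n) = bs z y (n+m) by omega]
        rw [show (2:ℕ) = 1 + 1 by rfl, seg_append, hdc]
        simp [seg, List.range_succ, bs_z hd]

lemma psi_seg_z (hd : Dec z y) (n m : ℕ) :
    psiL z (seg (dec z y) n m) ++ [z] = seg y (bs z y n) (bs z y (n + m) - bs z y n + 1) := by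
  rw [psi_seg hd, seg_append y (bs z y n) _ 1]
  have hmono : bs z y n ≤ bs z y (n + m) := bs_mono (by omega)
  congr 1
  rw [show bs z y n + (bs z y (n+m) - bs z y n) = bs z y (n+m) by omega]
  simp [seg, List.range_succ, bs_z hd]

lemma psi_factor (hd : Dec z y) {v : List A} (hv : IsFactor (dec z y) v) :
    IsFactor y (psiL z v ++ [z]) := by
  obtain ⟨n, hn⟩ := hv
  have : v = seg (dec z y) n v.length := hn
  rw [this, psi_seg_z hd]
  exact isFactor_seg _ _ _

/-- number of non-`z` letters in the segment `[i, i+n)` of `f`. -/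
def NZ (z : A) (f : ℕ → A) (i n : ℕ) : ℕ :=
  ((List.range n).filter (fun r => f (i + r) ≠ z)).length

lemma NZ_zero (z : A) (f : ℕ → A) (i : ℕ) : NZ z f i 0 = 0 := by simp [NZ]

lemma NZ_succ (z : A) (f : ℕ → A) (i n : ℕ) :
    NZ z f i (n + 1) = NZ z f i n + (if f (i + n) = z then 0 else 1) := by
  simp only [NZ, List.range_succ, List.filter_append, List.length_append]
  congr 1
  by_cases h : f (i + n) = z <;> simp [h]

lemma NZ_add (z : A) (f : ℕ → A) (i a b : ℕ) :
    NZ z f i (a + b) = NZ z f i a + NZ z f (i + a) b := by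
  induction b with
  | zero => simp [NZ_zero]
  | succ b ih =>
    rw [show a + (b + 1) = (a + b) + 1 by omega, NZ_succ, ih, NZ_succ]
    rw [show i + (a + b) = i + a + b by omega]
    omega

lemma NZ_pos (z : A) (f : ℕ → A) {i n p : ℕ} (h1 : i ≤ p) (h2 : p < i + n)
    (h3 : f p ≠ z) : 1 ≤ NZ z f i n := by
  have e : n = (p - i) + (1 + (i + n - p - 1)) := by omega
  rw [e, NZ_add, NZ_add]
  rw [show i + (p - i) = p by omega]
  rw [NZ_succ, NZ_zero, if_neg (by simpa using h3)]
  omega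

lemma NZ_two (z : A) (f : ℕ → A) {i n p q : ℕ} (h1 : i ≤ p) (hpq : p < q) (h2 : q < i + n)
    (h3 : f p ≠ z) (h4 : f q ≠ z) : 2 ≤ NZ z f i n := by
  have e : n = (q - i) + (i + n - q) := by omega
  rw [e, NZ_add]
  have a1 : 1 ≤ NZ z f i (q - i) := NZ_pos z f h1 (by omega) h3
  have a2 : 1 ≤ NZ z f (i + (q - i)) (i + n - q) := by
    apply NZ_pos z f (p := q) (by omega) (by omega) h4
  omega

lemma count_lemma (hd : Dec z y) : ∀ n m,
    bs z y (n + m) = bs z y n + m + NZ z (dec z y) n m ∧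
    NZ z y (bs z y n) (bs z y (n + m) - bs z y n) = NZ z (dec z y) n m := by
  intro n m
  induction m with
  | zero => simp [NZ_zero]
  | succ m ih =>
    obtain ⟨ih1, ih2⟩ := ih
    have hmono : bs z y n ≤ bs z y (n + m) := bs_mono (by omega)
    by_cases h : y (bs z y (n + m) + 1) = z
    · have hb : bs z y (n + m + 1) = bs z y (n + m) + 1 := by simp [bs, h]
      have hdc : dec z y (n + m) = z := h
      constructor
      · rw [show n + (m + 1) = n + m + 1 by omega, hb, NZ_succ, hdc]
        simp; omega
      · rw [show n + (m + 1) = n + m + 1 by omega, hb]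
        rw [show bs z y (n+m) + 1 - bs z y n = (bs z y (n+m) - bs z y n) + 1 by omega]
        rw [NZ_succ, NZ_succ, hdc]
        rw [show bs z y n + (bs z y (n+m) - bs z y n) = bs z y (n+m) by omega]
        rw [if_pos (bs_z hd (n+m)), if_pos rfl]
        omega
    · have hb : bs z y (n + m + 1) = bs z y (n + m) + 2 := by simp [bs, h]
      have hdc : dec z y (n + m) = y (bs z y (n + m) + 1) := rfl
      constructor
      · rw [show n + (m + 1) = n + m + 1 by omega, hb, NZ_succ]
        rw [if_neg (by rw [hdc]; exact h)]
        omega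
      · rw [show n + (m + 1) = n + m + 1 by omega, hb]
        rw [show bs z y (n+m) + 2 - bs z y n = ((bs z y (n+m) - bs z y n) + 1) + 1 by omega]
        rw [NZ_succ, NZ_succ, NZ_succ]
        rw [show bs z y n + (bs z y (n+m) - bs z y n) = bs z y (n+m) by omega]
        rw [show bs z y n + (bs z y (n+m) - bs z y n + 1) = bs z y (n+m) + 1 by omega]
        rw [if_pos (bs_z hd (n+m)), if_neg h, if_neg (by rw [hdc]; exact h)]
        omega

/-- deflation of a factor: any factor of `y` of length ≥ 2 is an infix of
`ψ_z v ++ [z]` for some strictly shorter factor `v` of the decoded word. -/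
lemma defl (hd : Dec z y) {u : List A} {i : ℕ} (hu : u = seg y i u.length)
    (hn : 2 ≤ u.length) :
    ∃ v, IsFactor (dec z y) v ∧ v.length < u.length ∧ u <:+: psiL z v ++ [z] := by
  set n := u.length with hnn
  set i' := if y i = z then i else i - 1 with hi'
  have hi'z : y i' = z := by
    rw [hi']
    split
    · assumption
    · rename_i hne
      have hipos : 1 ≤ i := by
        by_contra hc
        have : i = 0 := by omega
        rw [this] at hne
        exact hne hd.h0
      rcases hd.hsep (i - 1) with h' | h'
      · exact h'
      · rw [show i - 1 + 1 = i by omega] at h'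
        exact absurd h' hne
  have hi'le : i' ≤ i ∧ i ≤ i' + 1 := by rw [hi']; split <;> omega
  set e' := if y (i + n - 1) = z then i + n - 1 else i + n with he'
  have he'z : y e' = z := by
    rw [he']
    split
    · assumption
    · rename_i hne
      rcases hd.hsep (i + n - 1) with h' | h'
      · exact absurd h' hne
      · rwa [show i + n - 1 + 1 = i + n by omega] at h'
  have he'le : i + n - 1 ≤ e' ∧ e' ≤ i + n := by rw [he']; split <;> omega
  obtain ⟨n₀, hn₀⟩ := bs_surj hd i' hi'z
  obtain ⟨n₁, hn₁⟩ := bs_surj hd e' he'z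
  have hlt : n₀ < n₁ := by
    by_contra hc
    have := bs_mono (z := z) (y := y) (show n₁ ≤ n₀ by omega)
    omega
  refine ⟨seg (dec z y) n₀ (n₁ - n₀), isFactor_seg _ _ _, ?_, ?_⟩
  · -- length bound
    obtain ⟨c1, c2⟩ := count_lemma hd n₀ (n₁ - n₀)
    rw [show n₀ + (n₁ - n₀) = n₁ by omega] at c1 c2
    rw [hn₀, hn₁] at c1 c2
    simp only [seg_len]
    -- c1 : e' = i' + (n₁ - n₀) + NZ z (dec z y) n₀ (n₁ - n₀)
    -- c2 : NZ z y i' (e' - i') = NZ z (dec z y) n₀ (n₁ - n₀)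
    rw [hi'] at *
    by_cases h1 : y i = z <;> by_cases h2 : y (i + n - 1) = z
    · rw [if_pos h1] at c1 c2
      rw [he', if_pos h2] at c1 c2
      omega
    · rw [if_pos h1] at c1 c2
      rw [he', if_neg h2] at c1 c2
      have : 1 ≤ NZ z y i (i + n - i) := NZ_pos z y (p := i + n - 1) (by omega) (by omega) h2
      rw [show i + n - i = n by omega] at this
      have hc2 : NZ z y i n = NZ z (dec z y) n₀ (n₁ - n₀) := by
        rw [← c2]; congr 1; omega
      omega
    · rw [if_neg h1] at c1 c2
      rw [he', if_pos h2] at c1 c2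
      have : 1 ≤ NZ z y (i-1) (i + n - 1 - (i-1)) :=
        NZ_pos z y (p := i) (by omega) (by omega) h1
      omega
    · rw [if_neg h1] at c1 c2
      rw [he', if_neg h2] at c1 c2
      have : 2 ≤ NZ z y (i-1) (i + n - (i-1)) :=
        NZ_two z y (p := i) (q := i + n - 1) (by omega) (by omega) (by omega) h1 h2
      omega
  · -- infix
    have himg : psiL z (seg (dec z y) n₀ (n₁ - n₀)) ++ [z] =
        seg y i' (e' - i' + 1) := by
      rw [psi_seg_z hd, show n₀ + (n₁ - n₀) = n₁ by omega, hn₀, hn₁]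
    rw [himg, hu]
    exact infix_seg (by omega) (by omega)

lemma bs_shift (hd : Dec z y) (n : ℕ) :
    ∀ m, bs z (fun r => y (bs z y n + r)) m + bs z y n = bs z y (n + m) := by
  intro m
  induction m with
  | zero => simp [bs]
  | succ m ih =>
    set y' := fun r => y (bs z y n + r) with hy'
    have harg : y' (bs z y' m + 1) = y (bs z y (n + m) + 1) := by
      rw [hy']
      simp only
      congr 1
      rw [← hy']
      omega
    by_cases h : y (bs z y (n + m) + 1) = z
    · have e1 : bs z y' (m + 1) = bs z y' m + 1 := by
        simp [bs, harg, h]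
      have e2 : bs z y (n + (m + 1)) = bs z y (n + m) + 1 := by
        rw [show n + (m + 1) = (n + m) + 1 by omega]
        simp [bs, h]
      omega
    · have e1 : bs z y' (m + 1) = bs z y' m + 2 := by
        rw [show bs z y' (m+1) = bs z y' m + (if y' (bs z y' m + 1) = z then 1 else 2) from rfl]
        rw [harg, if_neg h]
      have e2 : bs z y (n + (m + 1)) = bs z y (n + m) + 2 := by
        rw [show n + (m + 1) = (n + m) + 1 by omega]
        simp [bs, h]
      omega

lemma dec_shift (hd : Dec z y) (n m : ℕ) :
    dec z (fun r => y (bs z y n + r)) m = dec z y (n + m) := by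
  have h := bs_shift hd n m
  show y (bs z y n + (bs z (fun r => y (bs z y n + r)) m + 1)) = y (bs z y (n + m) + 1)
  congr 1
  rw [← h]
  omega

lemma Dec_shift (hd : Dec z y) (n : ℕ) : Dec z (fun r => y (bs z y n + r)) := by
  constructor
  · show y (bs z y n + 0) = z
    rw [Nat.add_zero]
    exact bs_z hd n
  · intro i
    rcases hd.hsep (bs z y n + i) with h | h
    · exact Or.inl h
    · right
      show y (bs z y n + (i + 1)) = z
      rwa [show bs z y n + (i + 1) = bs z y n + i + 1 by omega]

lemma psi_head (v : List A) : ∃ T, psiL z v ++ [z] = z :: T := by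
  cases v with
  | nil => exact ⟨[], rfl⟩
  | cons c v' =>
    by_cases h : c = z
    · exact ⟨psiL z v' ++ [z], by simp [psiL, h]⟩
    · exact ⟨[c] ++ psiL z v' ++ [z], by simp [psiL, h]⟩

lemma psi_pal (v : List A) : (psiL z v ++ [z]).reverse = psiL z v.reverse ++ [z] := by
  induction v with
  | nil => rfl
  | cons c v' ih =>
    have h1 : psiL z (c :: v') ++ [z] =
        (if c = z then [z] else [z, c]) ++ (psiL z v' ++ [z]) := by
      simp [psiL]
    rw [h1, List.reverse_append, ih]
    have h2 : (c :: v').reverse = v'.reverse ++ [c] := by simp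
    rw [h2]
    have h3 : psiL z (v'.reverse ++ [c]) = psiL z v'.reverse ++ psiL z [c] := by
      simp [psiL]
    rw [h3]
    by_cases h : c = z <;> simp [h, psiL]

lemma decback_aux (hd : Dec z y) : ∀ (v : List A) (n₀ : ℕ),
    seg y (bs z y n₀) ((psiL z v).length + 1) = psiL z v ++ [z] →
    seg (dec z y) n₀ v.length = v := by
  intro v
  induction v with
  | nil => intro n₀ _; simp [seg]
  | cons c v' ih =>
    intro n₀ hseg
    by_cases h : c = z
    · have h1 : psiL z (c :: v') = z :: psiL z v' := by simp [psiL, h]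
      rw [h1] at hseg
      obtain ⟨T, hT⟩ := psi_head (z := z) v'
      have hlen : (z :: psiL z v').length + 1 = ((psiL z v').length + 1) + 1 := by simp
      rw [hlen, seg_cons] at hseg
      rw [show (z :: psiL z v') ++ [z] = z :: (psiL z v' ++ [z]) by simp] at hseg
      rw [hT, seg_cons] at hseg
      simp only [List.cons.injEq] at hseg
      obtain ⟨h2, h3, h4⟩ := hseg
      -- h3 : y (bs z y n₀ + 1) = z
      have hb : bs z y (n₀ + 1) = bs z y n₀ + 1 := by simp [bs, h3]
      have hdc : dec z y n₀ = c := h3.trans h.symm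
      rw [show (c :: v').length = 1 + v'.length by simp; omega, seg_append]
      have hihseg : seg y (bs z y (n₀ + 1)) ((psiL z v').length + 1) = psiL z v' ++ [z] := by
        rw [hb]
        rw [hT, seg_cons]
        rw [h3, h4]
      rw [ih (n₀ + 1) hihseg]
      simp [seg, List.range_succ, hdc]
    · have h1 : psiL z (c :: v') = z :: c :: psiL z v' := by simp [psiL, h]
      rw [h1] at hseg
      have hlen : (z :: c :: psiL z v').length + 1 = (((psiL z v').length + 1) + 1) + 1 := by simp
      rw [hlen, seg_cons, seg_cons] at hseg
      rw [show (z :: c :: psiL z v') ++ [z] = z :: c :: (psiL z v' ++ [z]) by simp] at hseg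
      simp only [List.cons.injEq] at hseg
      obtain ⟨h2, h3, h4⟩ := hseg
      -- h3 : y (bs n₀ + 1) = c
      have hb : bs z y (n₀ + 1) = bs z y n₀ + 2 := by
        have : ¬ y (bs z y n₀ + 1) = z := by rw [h3]; exact h
        simp [bs, this]
      have hdc : dec z y n₀ = c := h3
      rw [show (c :: v').length = 1 + v'.length by simp; omega, seg_append]
      have hihseg : seg y (bs z y (n₀ + 1)) ((psiL z v').length + 1) = psiL z v' ++ [z] := by
        rw [hb, show bs z y n₀ + 2 = bs z y n₀ + 1 + 1 by omega]
        exact h4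
      rw [ih (n₀ + 1) hihseg]
      simp [seg, List.range_succ, hdc]

lemma decback (hd : Dec z y) (v : List A) (h : IsFactor y (psiL z v ++ [z])) :
    IsFactor (dec z y) v := by
  obtain ⟨i, hi⟩ := h
  have hi' : psiL z v ++ [z] = seg y i ((psiL z v).length + 1) := by
    have : (psiL z v ++ [z]).length = (psiL z v).length + 1 := by simp
    rw [← this]
    exact hi
  have hyz : y i = z := by
    obtain ⟨T, hT⟩ := psi_head (z := z) v
    rw [hT] at hi'
    rw [show (psiL z v).length + 1 = ((psiL z v).length) + 1 from rfl, seg_cons] at hi'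
    simp only [List.cons.injEq] at hi'
    exact hi'.1.symm
  obtain ⟨n₀, hn₀⟩ := bs_surj hd i hyz
  refine ⟨n₀, ?_⟩
  have := decback_aux hd v n₀ (by rw [hn₀]; exact hi'.symm)
  exact this.symm

section Transfer
variable {s : ℕ → A}

/-- the decoding reflects pointwise-lex comparisons. -/
lemma refl_transfer (hds : Dec z s) (hdy : Dec z y) (l : LinearOrder A)
    (H : ∀ m, (∀ r, r < m → s r = y r) → l.le (s m) (y m)) :
    ∀ m, (∀ r, r < m → dec z s r = dec z y r) → l.le (dec z s m) (dec z y m) := by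
  intro m hag
  have AGREE : ∀ j, j ≤ m → bs z s j = bs z y j ∧ ∀ r, r < bs z s j → s r = y r := by
    intro j
    induction j with
    | zero => exact fun _ => ⟨rfl, fun r hr => absurd hr (by simp [bs])⟩
    | succ i ihj =>
      intro hjm
      obtain ⟨hb, hr⟩ := ihj (by omega)
      have h1 : s (bs z s i) = y (bs z s i) := by rw [bs_z hds i, hb, bs_z hdy i]
      have h2 : s (bs z s i + 1) = y (bs z s i + 1) := by
        have h2' := hag i (by omega)
        rw [dec, dec, ← hb] at h2'
        exact h2'
      have hbs : bs z s (i + 1) = bs z y (i + 1) := by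
        simp only [bs]
        rw [← hb, h2]
      refine ⟨hbs, ?_⟩
      intro r hrr
      have hle : bs z s (i + 1) ≤ bs z s i + 2 := bs_succ_le i
      rcases show r < bs z s i ∨ r = bs z s i ∨ r = bs z s i + 1 by omega with h' | h' | h'
      · exact hr r h'
      · rw [h']; exact h1
      · rw [h']; exact h2
  obtain ⟨hb, hr⟩ := AGREE m le_rfl
  have hH := H (bs z s m + 1) (fun r hrr => by
    rcases show r < bs z s m ∨ r = bs z s m by omega with h' | h'
    · exact hr r h'
    · rw [h', bs_z hds m, hb, bs_z hdy m])
  show s (bs z s m + 1) ≤ y (bs z y m + 1)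
  rw [← hb]
  exact hH

/-- main transfer: the lower-bound property descends through decoding. -/
lemma T1 [Fintype A] (hds : Dec z s) (hdy : Dec z y) (hLB : LBp s y) :
    LBp (dec z s) (dec z y) := by
  intro l a ha j m hagree
  match m with
  | 0 => simpa using ha (dec z y (j + 0))
  | (M + 1) =>
    have hhead : a = dec z y j := by simpa using hagree 0 (by omega)
    have hQ1 : 1 ≤ bs z y (j + 1) := by
      have := bs_ge (z := z) (y := y) (j + 1)
      omega
    have hlast : y (bs z y (j + 1) - 1) = a := by rw [bs_last hdy j, ← hhead]
    have KEY : ∀ M', (∀ r, r < M' → s r = y (bs z y (j + 1) + r)) →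
        l.le (s M') (y (bs z y (j + 1) + M')) := by
      intro M' hag
      have hh := hLB l a ha (bs z y (j + 1) - 1) (M' + 1) (fun r hr => by
        match r with
        | 0 => simpa using hlast.symm
        | (r' + 1) =>
          simp only [consW_succ]
          rw [show bs z y (j+1) - 1 + (r' + 1) = bs z y (j+1) + r' by omega]
          exact hag r' (by omega))
      simp only [consW_succ] at hh
      rwa [show bs z y (j+1) - 1 + (M' + 1) = bs z y (j+1) + M' by omega] at hh
    have hrefl := refl_transfer hds (Dec_shift hdy (j + 1)) l
      (fun mm hmm => by
        have := KEY mm (fun r hr => hmm r hr)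
        exact this) M
      (fun r hr => by
        rw [dec_shift hdy (j + 1) r]
        have := hagree (r + 1) (by omega)
        simp only [consW_succ] at this
        rwa [show j + (r + 1) = j + 1 + r by omega] at this)
    rw [dec_shift hdy (j + 1) M] at hrefl
    simp only [consW_succ]
    rwa [show j + (M + 1) = j + 1 + M by omega]

/-- the "all letters extend prefixes" property descends through decoding. -/
lemma T2 (hds : Dec z s)
    (hext : ∀ (a : A) m, IsFactor s (pref (consW a s) m)) :
    ∀ (a : A) m, IsFactor (dec z s) (pref (consW a (dec z s)) m) := by
  intro a m
  match m with
  | 0 => exact ⟨0, by simp [pref]⟩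
  | (K + 1) =>
    have hpref : pref (consW a (dec z s)) (K + 1) = a :: seg (dec z s) 0 K := by
      rw [pref_eq_seg, seg_consW]
    rw [hpref]
    apply decback hds
    have himg : psiL z (seg (dec z s) 0 K) ++ [z] = seg s 0 (bs z s K + 1) := by
      rw [psi_seg_z hds 0 K]
      congr 1 <;> simp [bs]
    by_cases hza : a = z
    · have h1 : psiL z (a :: seg (dec z s) 0 K) = z :: psiL z (seg (dec z s) 0 K) := by
        simp [psiL, hza]
      have hW : psiL z (a :: seg (dec z s) 0 K) ++ [z] =
          seg (consW z s) 0 ((bs z s K + 1) + 1) := by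
        rw [h1, List.cons_append, himg, seg_consW]
      rw [hW]
      have := hext z (bs z s K + 1 + 1)
      rwa [pref_eq_seg] at this
    · have h1 : psiL z (a :: seg (dec z s) 0 K) =
          z :: a :: psiL z (seg (dec z s) 0 K) := by
        simp [psiL, hza]
      set M := bs z s K + 2 with hM
      have hW : psiL z (a :: seg (dec z s) 0 K) ++ [z] =
          z :: seg (consW a s) 0 M := by
        rw [h1, List.cons_append, List.cons_append, himg]
        rw [hM, show bs z s K + 2 = (bs z s K + 1) + 1 from rfl, seg_consW]
      rw [hW]
      -- find an occurrence of pref (consW a s) M at a position ≥ 1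
      obtain ⟨i, hi⟩ := hext a M
      have hlen : (pref (consW a s) M).length = M := by simp [pref]
      rw [hlen] at hi
      have hi' : seg (consW a s) 0 M = seg s i M := by
        rw [← pref_eq_seg]; exact hi
      have hE : ∀ r, r < M → consW a s r = s (i + r) := by
        intro r hr
        have := seg_eq_entries hi' r hr
        simpa using this
      have hi0 : s i = a := by
        have := hE 0 (by omega)
        simpa using this.symm
      have hipos : 1 ≤ i := by
        rcases Nat.eq_zero_or_pos i with h0 | h0
        · exfalso
          apply hza
          rw [← hi0, h0, hds.h0]
        · exact h0
      have hprev : s (i - 1) = z := by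
        rcases hds.hsep (i - 1) with h' | h'
        · exact h'
        · exfalso
          rw [show i - 1 + 1 = i by omega, hi0] at h'
          exact hza h'
      refine ⟨i - 1, ?_⟩
      show z :: seg (consW a s) 0 M = seg s (i - 1) (z :: seg (consW a s) 0 M).length
      have hlen2 : (z :: seg (consW a s) 0 M).length = M + 1 := by simp
      rw [hlen2]
      apply eq_seg (by simp)
      intro r hr
      match r with
      | 0 =>
        have h00 : (z :: seg (consW a s) 0 M)[0]? = some z := by simp
        rw [h00, Nat.add_zero, hprev]
      | (r' + 1) =>
        have : (z :: seg (consW a s) 0 M)[r' + 1]? = (seg (consW a s) 0 M)[r']? := by simp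
        rw [this, getElem?_seg _ 0 M r' (by omega)]
        rw [Nat.zero_add, hE r' (by omega)]
        congr 2
        omega

end Transfer

end Decode

section Master
variable [Fintype A] [DecidableEq A]

theorem master : ∀ (n : ℕ) (s x : ℕ → A),
    LBp s s → (∀ (a : A) (m : ℕ), IsFactor s (pref (consW a s) m)) → LBp s x →
    ∀ u, IsFactor x u → u.length ≤ n → IsFactor s u ∧ IsFactor s u.reverse := by
  intro n
  induction n using Nat.strong_induction_on with
  | _ n IH =>
  intro s x hss hext hsx u hu hlen
  by_cases hsmall : u.length ≤ 1
  · match u with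
    | [] =>
      exact ⟨⟨0, by simp⟩, ⟨0, by simp⟩⟩
    | [c] =>
      obtain ⟨i, hi⟩ := hu
      have hc : c = x i := by
        have h0 := seg_eq_entries (show seg (fun _ => c) 0 1 = seg x i 1 by
          rw [show seg (fun _ => c) 0 1 = [c] by simp [seg, List.range_succ]]
          exact hi) 0 (by omega)
        simpa using h0
      have hp : pref (consW (x i) s) 1 = [x i] := by
        simp [pref, List.range_succ]
      have h1 : IsFactor s [c] := by
        rw [hc, ← hp]
        exact hext (x i) 1
      exact ⟨h1, by simpa using h1⟩
    | (c1 :: c2 :: tl) => exact absurd hsmall (by simp)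
  · push_neg at hsmall
    set z := s 0 with hzdef
    have hds : Dec z s := ⟨hzdef.symm, by rw [hzdef]; exact sep_of_LBp hss⟩
    have hsepx : ∀ i, x i = z ∨ x (i + 1) = z := by
      rw [hzdef]; exact sep_of_LBp hsx
    have hY : ∃ yy : ℕ → A, Dec z yy ∧ LBp s yy ∧ IsFactor yy u := by
      by_cases hx0 : x 0 = z
      · exact ⟨x, ⟨hx0, hsepx⟩, hsx, hu⟩
      · refine ⟨consW z x, ⟨rfl, ?_⟩, ?_, ?_⟩
        · intro i
          match i with
          | 0 => exact Or.inl rfl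
          | (i' + 1) =>
            rcases hsepx i' with h | h
            · exact Or.inl h
            · exact Or.inr h
        · rw [hzdef]
          exact LBp_consW hsx (by rw [← hzdef]; exact hx0)
        · obtain ⟨i, hi⟩ := hu
          refine ⟨i + 1, ?_⟩
          show u = seg (consW z x) (i + 1) u.length
          rw [show u = seg x i u.length from hi, seg_len]
          apply seg_congr
          intro r hr
          show x (i + r) = consW z x (i + 1 + r)
          rw [show i + 1 + r = (i + r) + 1 by omega, consW_succ]
    obtain ⟨y, hdy, hsy, huy⟩ := hY
    obtain ⟨iy, hiy⟩ := huy
    obtain ⟨v, hvfac, hvlen, hinf⟩ := defl hdy hiy (by omega)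
    have hss' : LBp (dec z s) (dec z s) := T1 hds hds hss
    have hext' := T2 hds hext
    have hsx' : LBp (dec z s) (dec z y) := T1 hds hdy hsy
    obtain ⟨hv1, hv2⟩ := IH (u.length - 1) (by omega) (dec z s) (dec z y)
      hss' hext' hsx' v hvfac (by omega)
    constructor
    · exact factor_of_infix hinf (psi_factor hds hv1)
    · have hinf' : u.reverse <:+: psiL z v.reverse ++ [z] := by
        rw [← psi_pal]
        exact List.reverse_infix.mpr hinf
      exact factor_of_infix hinf' (psi_factor hds hv2)

end Master

section Final
variable [Fintype A]

lemma leftspecial {s : ℕ → A} (hss : LBp s s) {u : List A} {a b : A}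
    (hab : a ≠ b) (ha : IsFactor s (a :: u)) (hb : IsFactor s (b :: u)) :
    u = pref s u.length := by
  obtain ⟨i, hi⟩ := ha
  obtain ⟨j, hj⟩ := hb
  set n := u.length with hn
  have hi' : a :: u = seg s i (n + 1) := by
    rw [show n + 1 = (a :: u).length by simp [hn]]
    exact hi
  have hj' : b :: u = seg s j (n + 1) := by
    rw [show n + 1 = (b :: u).length by simp [hn]]
    exact hj
  have hEa := seg_entry hi'
  have hEb := seg_entry hj'
  have ha0 : s i = a := by
    have := hEa 0 (by omega)
    simpa using this.symm
  have hb0 : s j = b := by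
    have := hEb 0 (by omega)
    simpa using this.symm
  have hau : ∀ r, r < n → u[r]? = some (s (i + 1 + r)) := by
    intro r hr
    have := hEa (r + 1) (by omega)
    simpa [show i + (r + 1) = i + 1 + r by omega] using this
  have hbu : ∀ r, r < n → u[r]? = some (s (j + 1 + r)) := by
    intro r hr
    have := hEb (r + 1) (by omega)
    simpa [show j + (r + 1) = j + 1 + r by omega] using this
  have C : ∀ r, r < n → s (i + 1 + r) = s r ∧ s (j + 1 + r) = s r := by
    intro r
    induction r using Nat.strong_induction_on with
    | _ r IHr =>
    intro hr
    have hij : s (i + 1 + r) = s (j + 1 + r) :=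
      Option.some.inj ((hau r hr).symm.trans (hbu r hr))
    have key : ∀ (P : ℕ) (c : A), s P = c → (∀ q, q < r → s (P + 1 + q) = s q) →
        ∀ (l : LinearOrder A), (∀ e, l.le c e) → l.le (s r) (s (P + 1 + r)) := by
      intro P c hPc hagq l hbot
      have hh := hss l c hbot P (r + 1) (fun q hq => by
        match q with
        | 0 => simpa using hPc.symm
        | (q' + 1) =>
          simp only [consW_succ]
          rw [show P + (q' + 1) = P + 1 + q' by omega]
          exact (hagq q' (by omega)).symm)
      simp only [consW_succ] at hh
      rwa [show P + (r + 1) = P + 1 + r by omega] at hh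
    by_cases hpv : s (i + 1 + r) = s r
    · exact ⟨hpv, hij.symm.trans hpv⟩
    · exfalso
      have h1 : ∀ l : LinearOrder A, (∀ e, l.le a e) → l.le (s r) (s (i + 1 + r)) :=
        fun l hbot => key i a ha0 (fun q hq => (IHr q hq (by omega)).1) l hbot
      have h2 : ∀ l : LinearOrder A, (∀ e, l.le b e) → l.le (s r) (s (j + 1 + r)) :=
        fun l hbot => key j b hb0 (fun q hq => (IHr q hq (by omega)).2) l hbot
      have hfa : s r = a := forcing hpv h1
      have hfb : s r = b :=
        forcing (show s (j + 1 + r) ≠ s r from fun hh => hpv (hij.trans hh)) h2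
      exact hab (hfa.symm.trans hfb)
  rw [pref_eq_seg]
  apply eq_seg hn.symm
  intro r hr
  rw [hau r hr, (C r hr).1, Nat.zero_add]

end Final

end Stmt11Aux

/-- If `t` is fine with witness `s` and `a·s = min(s)` for every letter `a` and order
making `a` minimal, then `F(t) = F(s)`; consequently `t` is an `A`-strict
episturmian word. -/
theorem stmt_11 {A : Type*} [Fintype A] (t s : ℕ → A)
    (hfine : ∀ (l : LinearOrder A) (a : A), (∀ b, l.le a b) → IsMinWord l.lt t (consW a s))
    (hAR : ∀ (l : LinearOrder A) (a : A), (∀ b, l.le a b) → IsMinWord l.lt s (consW a s)) :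
    (∀ u : List A, IsFactor t u ↔ IsFactor s u) ∧ StrictEpisturmian t := by
  classical
  have hLBss : Stmt11Aux.LBp s s := Stmt11Aux.LBp_of_min hAR
  have hLBst : Stmt11Aux.LBp s t := Stmt11Aux.LBp_of_min hfine
  have hext : ∀ (a : A) (m : ℕ), IsFactor s (pref (consW a s) m) := by
    intro a m
    obtain ⟨l, hl⟩ := Stmt11Aux.exists_bot a
    exact (hAR l a hl m).1
  have hfwd : ∀ u, IsFactor t u → IsFactor s u :=
    fun u hu => (Stmt11Aux.master u.length s t hLBss hext hLBst u hu le_rfl).1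
  have hbwd : ∀ u, IsFactor s u → IsFactor t u := by
    intro u hu
    obtain ⟨i, hi⟩ := hu
    obtain ⟨l, hl⟩ := Stmt11Aux.exists_bot (s 0)
    have hp : IsFactor t (pref (consW (s 0) s) (i + u.length + 1)) :=
      (hfine l (s 0) hl (i + u.length + 1)).1
    apply Stmt11Aux.factor_of_infix ?_ hp
    rw [Stmt11Aux.pref_eq_seg, Stmt11Aux.seg_consW]
    have h2 : u = Stmt11Aux.seg s i u.length := hi
    have h1 : u <:+: Stmt11Aux.seg s 0 (i + u.length) := by
      conv_lhs => rw [h2]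
      exact Stmt11Aux.infix_seg (by omega) (by simp)
    exact h1.trans (List.suffix_cons (s 0) _).isInfix
  refine ⟨fun u => ⟨hfwd u, hbwd u⟩, s, ⟨⟨?_, ?_⟩, ?_⟩, fun u => ⟨hfwd u, hbwd u⟩⟩
  · intro u hu
    exact (Stmt11Aux.master u.length s s hLBss hext hLBss u hu le_rfl).2
  · rintro u ⟨a, b, hab, ha, hb⟩
    exact Stmt11Aux.leftspecial hLBss hab ha hb
  · intro n a
    have := hext a (n + 1)
    rwa [Stmt11Aux.pref_eq_seg, Stmt11Aux.seg_consW, ← Stmt11Aux.pref_eq_seg] at this
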